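/- Let a, b, c ≥ 3 be integers such that at least one of a, b, c is not divisible by 4. Then for every prime p and every n ∈ ℤ_p (the ring of p-adic integers) there exist x, y, z ∈ ℤ_p such that ((a−2)x² − (a−4)x) + ((b−2)y² − (b−4)y) + ((c−2)z² − (c−4)z) = 2n. In particular, every natural number n is represented by P_a(x) + P_b(y) + P_c(z) over ℤ_p for every prime p. -/

import Mathlib

open Polynomial PadicInt

section helpers
variable {p : ℕ} [Fact p.Prime]

lemma myToZMod_zero_iff (w : ℤ_[p]) : PadicInt.toZMod w = 0 ↔ ‖w‖ < 1 := by
  rw [← RingHom.mem_ker, PadicInt.ker_toZMod, PadicInt.maximalIdeal_eq_span_p,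
    Ideal.mem_span_singleton, ← PadicInt.norm_lt_one_iff_dvd]

lemma myNorm_eq_one (w : ℤ_[p]) (h : PadicInt.toZMod w ≠ 0) : ‖w‖ = 1 := by
  refine le_antisymm (PadicInt.norm_le_one w) ?_
  by_contra hlt
  exact h ((myToZMod_zero_iff w).2 (lt_of_not_ge hlt))

lemma myOnevar (A B t x0 : ℤ_[p])
    (h : ‖A * x0 ^ 2 + B * x0 - t‖ < ‖2 * A * x0 + B‖ ^ 2) :
    ∃ x : ℤ_[p], A * x ^ 2 + B * x = t := by
  have he : ∀ w : ℤ_[p], (C A * X ^ 2 + C B * X - C t).eval w = A * w ^ 2 + B * w - t := by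
    intro w; simp
  have hd : ∀ w : ℤ_[p], (C A * X ^ 2 + C B * X - C t).derivative.eval w = 2 * A * w + B := by
    intro w; simp [derivative_pow]; ring
  obtain ⟨z, hz, -⟩ := hensels_lemma (F := C A * X ^ 2 + C B * X - C t) (a := x0)
    (by rw [coe_aeval_eq_eval, he, hd]; exact h)
  rw [coe_aeval_eq_eval, he] at hz
  exact ⟨z, by linear_combination hz⟩

lemma myOnevar_zmod (A B t : ℤ_[p]) (xb : ZMod p)
    (h1 : PadicInt.toZMod A * xb ^ 2 + PadicInt.toZMod B * xb = PadicInt.toZMod t)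
    (h2 : 2 * PadicInt.toZMod A * xb + PadicInt.toZMod B ≠ 0) :
    ∃ x : ℤ_[p], A * x ^ 2 + B * x = t := by
  set x0 : ℤ_[p] := ((xb.val : ℕ) : ℤ_[p]) with hx0
  have hx : PadicInt.toZMod x0 = xb := by
    rw [hx0, map_natCast]; exact ZMod.natCast_rightInverse xb
  apply myOnevar A B t x0
  have e1 : ‖A * x0 ^ 2 + B * x0 - t‖ < 1 := by
    rw [← myToZMod_zero_iff]
    simp only [map_sub, map_add, map_mul, map_pow, hx]
    rw [h1]; ring
  have e2 : ‖2 * A * x0 + B‖ = 1 := by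
    apply myNorm_eq_one
    simpa only [map_add, map_mul, map_ofNat, hx] using h2
  rw [e2, one_pow]; exact e1

end helpers

section field
variable {p : ℕ} [Fact p.Prime]

lemma mySumtwo (hp : p ≠ 2) (A B s : ZMod p) (hA : A ≠ 0) (hB : B ≠ 0) :
    ∃ u v : ZMod p, A * u ^ 2 + B * v ^ 2 = s := by
  have hodd : Fintype.card (ZMod p) % 2 = 1 := by
    rw [ZMod.card]
    exact ((Fact.out : p.Prime).eq_two_or_odd).resolve_left hp
  have hf : degree (C A * X ^ 2 : (ZMod p)[X]) = 2 := by
    rw [degree_C_mul_X_pow 2 hA]; rfl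
  have hg : degree (C B * X ^ 2 - C s : (ZMod p)[X]) = 2 := by
    have hlt : degree (C s : (ZMod p)[X]) < degree (C B * X ^ 2 : (ZMod p)[X]) := by
      rw [degree_C_mul_X_pow 2 hB]
      exact lt_of_le_of_lt degree_C_le (by decide)
    rw [degree_sub_eq_left_of_degree_lt hlt, degree_C_mul_X_pow 2 hB]; rfl
  obtain ⟨u, v, huv⟩ := FiniteField.exists_root_sum_quadratic hf hg hodd
  simp only [eval_add, eval_sub, eval_mul, eval_pow, eval_C, eval_X] at huv
  exact ⟨u, v, by linear_combination huv⟩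

lemma myInner (hp2 : (2 : ZMod p) ≠ 0) (A B : ZMod p) (hA : A ≠ 0) (hB : B ≠ 0)
    (r u v : ZMod p)
    (huv : B * u ^ 2 + A * v ^ 2 = 4 * A * B * r + B * (2 - A) ^ 2 + A * (2 - B) ^ 2) :
    ∃ x y : ZMod p,
      (A * x ^ 2 + (2 - A) * x) + (B * y ^ 2 + (2 - B) * y) = r ∧
      2 * A * x + (2 - A) = u ∧ 2 * B * y + (2 - B) = v := by
  set x : ZMod p := (u - (2 - A)) / (2 * A) with hxd
  set y : ZMod p := (v - (2 - B)) / (2 * B) with hyd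
  have hdx : 2 * A * x + (2 - A) = u := by rw [hxd]; field_simp; ring
  have hdy : 2 * B * y + (2 - B) = v := by rw [hyd]; field_simp; ring
  have h4AB : (4 : ZMod p) * A * B ≠ 0 := by
    have h4 : (4 : ZMod p) = 2 ^ 2 := by norm_num
    rw [h4]
    exact mul_ne_zero (mul_ne_zero (pow_ne_zero _ hp2) hA) hB
  have hu : u = 2 * A * x + (2 - A) := hdx.symm
  have hv : v = 2 * B * y + (2 - B) := hdy.symm
  rw [hu, hv] at huv
  have key : 4 * A * B * ((A * x ^ 2 + (2 - A) * x) + (B * y ^ 2 + (2 - B) * y)) =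
      4 * A * B * r := by linear_combination huv
  exact ⟨x, y, mul_left_cancel₀ h4AB key, hdx, hdy⟩

lemma myKey (hp : p ≠ 2) (A B C t : ZMod p) :
    ∃ x y z : ZMod p,
      (A * x ^ 2 + (2 - A) * x) + (B * y ^ 2 + (2 - B) * y) + (C * z ^ 2 + (2 - C) * z) = t ∧
      (2 * A * x + (2 - A) ≠ 0 ∨ 2 * B * y + (2 - B) ≠ 0 ∨ 2 * C * z + (2 - C) ≠ 0) := by
  have hp2 : (2 : ZMod p) ≠ 0 := by
    have : ((2 : ℕ) : ZMod p) ≠ 0 := by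
      rw [Ne, ZMod.natCast_eq_zero_iff]
      intro h
      rcases (Nat.Prime.eq_one_or_self_of_dvd Nat.prime_two p h) with h1 | h2
      · exact (Fact.out : p.Prime).ne_one h1
      · exact hp h2
    simpa using this
  by_cases hA : A = 0
  · subst hA
    refine ⟨t / 2, 0, 0, by field_simp; ring, Or.inl (by simpa using hp2)⟩
  by_cases hB : B = 0
  · subst hB
    refine ⟨0, t / 2, 0, by field_simp; ring, Or.inr (Or.inl (by simpa using hp2))⟩
  have h8 : (8 : ZMod p) * A * B ≠ 0 := by
    have h8' : (8 : ZMod p) = 2 ^ 3 := by norm_num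
    rw [h8']
    exact mul_ne_zero (mul_ne_zero (pow_ne_zero _ hp2) hA) hB
  obtain ⟨z1, hs⟩ : ∃ z1 : ZMod p,
      4 * A * B * (t - (C * z1 ^ 2 + (2 - C) * z1)) + B * (2 - A) ^ 2 + A * (2 - B) ^ 2 ≠ 0 := by
    by_cases h0 : 4 * A * B * (t - (C * 0 ^ 2 + (2 - C) * 0)) + B * (2 - A) ^ 2 + A * (2 - B) ^ 2 ≠ 0
    · exact ⟨0, h0⟩
    · push_neg at h0
      refine ⟨1, fun h1 => h8 ?_⟩
      linear_combination h0 - h1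
  set s := 4 * A * B * (t - (C * z1 ^ 2 + (2 - C) * z1)) + B * (2 - A) ^ 2 + A * (2 - B) ^ 2
    with hs_def
  obtain ⟨u, v, huv⟩ := mySumtwo hp B A s hB hA
  obtain ⟨x, y, hxy, hdx, hdy⟩ := myInner hp2 A B hA hB (t - (C * z1 ^ 2 + (2 - C) * z1)) u v
    (by rw [huv, hs_def])
  have huv0 : u ≠ 0 ∨ v ≠ 0 := by
    by_contra h
    push_neg at h
    apply hs
    rw [h.1, h.2] at huv
    linear_combination -huv
  refine ⟨x, y, z1, by linear_combination hxy, ?_⟩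
  rcases huv0 with h | h
  · exact Or.inl (by rw [hdx]; exact h)
  · exact Or.inr (Or.inl (by rw [hdy]; exact h))

end field

section lift
variable {p : ℕ} [Fact p.Prime]

lemma myLift (A B C n : ℤ_[p]) (xb yb zb : ZMod p)
    (heq : (PadicInt.toZMod A * xb ^ 2 + (2 - PadicInt.toZMod A) * xb)
      + (PadicInt.toZMod B * yb ^ 2 + (2 - PadicInt.toZMod B) * yb)
      + (PadicInt.toZMod C * zb ^ 2 + (2 - PadicInt.toZMod C) * zb) = PadicInt.toZMod (2 * n))
    (hd : 2 * PadicInt.toZMod A * xb + (2 - PadicInt.toZMod A) ≠ 0) :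
    ∃ x y z : ℤ_[p],
      (A * x ^ 2 + (2 - A) * x) + (B * y ^ 2 + (2 - B) * y) + (C * z ^ 2 + (2 - C) * z)
        = 2 * n := by
  set y0 : ℤ_[p] := ((yb.val : ℕ) : ℤ_[p]) with hy0
  set z0 : ℤ_[p] := ((zb.val : ℕ) : ℤ_[p]) with hz0
  have hy : PadicInt.toZMod y0 = yb := by rw [hy0, map_natCast]; exact ZMod.natCast_rightInverse yb
  have hz : PadicInt.toZMod z0 = zb := by rw [hz0, map_natCast]; exact ZMod.natCast_rightInverse zb
  obtain ⟨x, hx⟩ := myOnevar_zmod A (2 - A)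
    (2 * n - ((B * y0 ^ 2 + (2 - B) * y0) + (C * z0 ^ 2 + (2 - C) * z0))) xb
    (by
      simp only [map_sub, map_add, map_mul, map_pow, map_ofNat, hy, hz]
      simp only [map_mul, map_ofNat] at heq
      linear_combination heq)
    (by simpa only [map_sub, map_ofNat] using hd)
  exact ⟨x, y0, z0, by linear_combination hx⟩

end lift

lemma myTwoCase (m : ℤ) (hm : ¬(4 ∣ m)) (n : ℤ_[2]) :
    ∃ x : ℤ_[2], ((m - 2 : ℤ) : ℤ_[2]) * x ^ 2 - ((m - 4 : ℤ) : ℤ_[2]) * x = 2 * n := by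
  have h2 : ‖(2 : ℤ_[2])‖ < 1 := by
    have hp2 : ‖((2 : ℕ) : ℤ_[2])‖ = ((2 : ℕ) : ℝ)⁻¹ := PadicInt.norm_p
    rw [show ((2 : ℕ) : ℤ_[2]) = (2 : ℤ_[2]) from by norm_cast] at hp2
    rw [hp2]; norm_num
  have hsmall : ∀ w : ℤ_[2], ‖2 * w‖ < 1 := by
    intro w
    calc ‖2 * w‖ ≤ ‖(2 : ℤ_[2])‖ * ‖w‖ := norm_mul_le _ _
    _ ≤ ‖(2 : ℤ_[2])‖ * 1 := mul_le_mul_of_nonneg_left (PadicInt.norm_le_one _) (norm_nonneg _)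
    _ = ‖(2 : ℤ_[2])‖ := mul_one _
    _ < 1 := h2
  have hone : ∀ k : ℤ, ¬((2 : ℤ) ∣ k) → ‖((k : ℤ) : ℤ_[2])‖ = 1 := by
    intro k hk
    refine le_antisymm (PadicInt.norm_le_one _) ?_
    by_contra hlt
    exact hk (by exact_mod_cast (PadicInt.norm_int_lt_one_iff_dvd _).mp (lt_of_not_ge hlt))
  rcases Int.even_or_odd m with he | ho
  · -- m ≡ 2 mod 4
    obtain ⟨k, hk⟩ := he
    obtain ⟨j, hj⟩ : ∃ j : ℤ, m = 4 * j + 2 := ⟨(m - 2) / 4, by omega⟩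
    have hBnorm : ‖((1 - 2 * j : ℤ) : ℤ_[2])‖ = 1 := hone _ (by omega)
    have hcond : ‖((2 * j : ℤ) : ℤ_[2]) * n ^ 2 + ((1 - 2 * j : ℤ) : ℤ_[2]) * n - n‖
        < ‖2 * ((2 * j : ℤ) : ℤ_[2]) * n + ((1 - 2 * j : ℤ) : ℤ_[2])‖ ^ 2 := by
      have hder : ‖2 * ((2 * j : ℤ) : ℤ_[2]) * n + ((1 - 2 * j : ℤ) : ℤ_[2])‖ = 1 := by
        rw [show (2 : ℤ_[2]) * ((2 * j : ℤ) : ℤ_[2]) * n = 2 * (((2 * j : ℤ) : ℤ_[2]) * n)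
          from by ring]
        rw [PadicInt.norm_add_eq_max_of_ne (by rw [hBnorm]; exact ne_of_lt (hsmall _)), hBnorm]
        exact max_eq_right (le_of_lt (hsmall _))
      have hfe : ((2 * j : ℤ) : ℤ_[2]) * n ^ 2 + ((1 - 2 * j : ℤ) : ℤ_[2]) * n - n
          = 2 * (((j : ℤ) : ℤ_[2]) * (n ^ 2 - n)) := by push_cast; ring
      rw [hder, one_pow, hfe]
      exact hsmall _
    obtain ⟨x, hx⟩ := myOnevar ((2 * j : ℤ) : ℤ_[2]) ((1 - 2 * j : ℤ) : ℤ_[2]) n n hcond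
    refine ⟨x, ?_⟩
    subst hj
    push_cast at hx ⊢
    linear_combination 2 * hx
  · -- m odd
    obtain ⟨k, hk⟩ := ho
    have hBnorm : ‖((-(m - 4) : ℤ) : ℤ_[2])‖ = 1 := hone _ (by omega)
    have hcond : ‖((m - 2 : ℤ) : ℤ_[2]) * 0 ^ 2 + ((-(m - 4) : ℤ) : ℤ_[2]) * 0 - 2 * n‖
        < ‖2 * ((m - 2 : ℤ) : ℤ_[2]) * 0 + ((-(m - 4) : ℤ) : ℤ_[2])‖ ^ 2 := by
      rw [show ((m - 2 : ℤ) : ℤ_[2]) * 0 ^ 2 + ((-(m - 4) : ℤ) : ℤ_[2]) * 0 - 2 * n = -(2 * n)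
        from by ring]
      rw [show (2 : ℤ_[2]) * ((m - 2 : ℤ) : ℤ_[2]) * 0 + ((-(m - 4) : ℤ) : ℤ_[2])
        = ((-(m - 4) : ℤ) : ℤ_[2]) from by ring]
      rw [hBnorm, one_pow, norm_neg]
      exact hsmall _
    obtain ⟨x, hx⟩ := myOnevar ((m - 2 : ℤ) : ℤ_[2]) ((-(m - 4) : ℤ) : ℤ_[2]) (2 * n) 0 hcond
    refine ⟨x, ?_⟩
    push_cast at hx ⊢
    linear_combination hx

theorem stmt12 (a b c : ℤ) (ha : 3 ≤ a) (hb : 3 ≤ b) (hc : 3 ≤ c)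
    (h4 : ¬(4 ∣ a) ∨ ¬(4 ∣ b) ∨ ¬(4 ∣ c))
    (p : ℕ) [Fact p.Prime] :
    (∀ n : ℤ_[p], ∃ x y z : ℤ_[p],
      (((a - 2 : ℤ) : ℤ_[p]) * x ^ 2 - ((a - 4 : ℤ) : ℤ_[p]) * x)
      + (((b - 2 : ℤ) : ℤ_[p]) * y ^ 2 - ((b - 4 : ℤ) : ℤ_[p]) * y)
      + (((c - 2 : ℤ) : ℤ_[p]) * z ^ 2 - ((c - 4 : ℤ) : ℤ_[p]) * z) = 2 * n) ∧
    (∀ n : ℕ, ∃ x y z : ℤ_[p],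
      (((a - 2 : ℤ) : ℤ_[p]) * x ^ 2 - ((a - 4 : ℤ) : ℤ_[p]) * x)
      + (((b - 2 : ℤ) : ℤ_[p]) * y ^ 2 - ((b - 4 : ℤ) : ℤ_[p]) * y)
      + (((c - 2 : ℤ) : ℤ_[p]) * z ^ 2 - ((c - 4 : ℤ) : ℤ_[p]) * z) = 2 * (n : ℤ_[p])) := by
  have main : ∀ n : ℤ_[p], ∃ x y z : ℤ_[p],
      (((a - 2 : ℤ) : ℤ_[p]) * x ^ 2 - ((a - 4 : ℤ) : ℤ_[p]) * x)
      + (((b - 2 : ℤ) : ℤ_[p]) * y ^ 2 - ((b - 4 : ℤ) : ℤ_[p]) * y)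
      + (((c - 2 : ℤ) : ℤ_[p]) * z ^ 2 - ((c - 4 : ℤ) : ℤ_[p]) * z) = 2 * n := by
    intro n
    rcases eq_or_ne p 2 with hp | hp
    · subst hp
      rcases h4 with hm | hm | hm
      · obtain ⟨x, hx⟩ := myTwoCase a hm n
        exact ⟨x, 0, 0, by push_cast at hx ⊢; linear_combination hx⟩
      · obtain ⟨y, hy⟩ := myTwoCase b hm n
        exact ⟨0, y, 0, by push_cast at hy ⊢; linear_combination hy⟩
      · obtain ⟨z, hz⟩ := myTwoCase c hm n
        exact ⟨0, 0, z, by push_cast at hz ⊢; linear_combination hz⟩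
    · obtain ⟨xb, yb, zb, heq, hd⟩ := myKey hp
        (PadicInt.toZMod ((a - 2 : ℤ) : ℤ_[p])) (PadicInt.toZMod ((b - 2 : ℤ) : ℤ_[p]))
        (PadicInt.toZMod ((c - 2 : ℤ) : ℤ_[p])) (PadicInt.toZMod (2 * n))
      rcases hd with h | h | h
      · obtain ⟨x, y, z, hs⟩ := myLift ((a - 2 : ℤ) : ℤ_[p]) ((b - 2 : ℤ) : ℤ_[p])
          ((c - 2 : ℤ) : ℤ_[p]) n xb yb zb heq h
        exact ⟨x, y, z, by push_cast at hs ⊢; linear_combination hs⟩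
      · obtain ⟨y, x, z, hs⟩ := myLift ((b - 2 : ℤ) : ℤ_[p]) ((a - 2 : ℤ) : ℤ_[p])
          ((c - 2 : ℤ) : ℤ_[p]) n yb xb zb (by linear_combination heq) h
        exact ⟨x, y, z, by push_cast at hs ⊢; linear_combination hs⟩
      · obtain ⟨z, x, y, hs⟩ := myLift ((c - 2 : ℤ) : ℤ_[p]) ((a - 2 : ℤ) : ℤ_[p])
          ((b - 2 : ℤ) : ℤ_[p]) n zb xb yb (by linear_combination heq) h
        exact ⟨x, y, z, by push_cast at hs ⊢; linear_combination hs⟩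
  exact ⟨main, fun n => main ((n : ℕ) : ℤ_[p])⟩
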